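/- Let k ≥ 0 and let d₁, d₂ ∈ D be two distinct directions. Suppose a family of lines consists of 5k+1 pairwise disjoint lines in direction d₁ and 5k+1 pairwise disjoint lines in direction d₂. Then the union of these lines contains at least (5k+1)·5 + 4 lattice points. -/

import Mathlib

/-- The four directions of Morpion Solitaire. -/
def Dir : Set (ℤ × ℤ) := {(1, 0), (0, 1), (1, 1), (1, -1)}

/-- The line (segment) of length 5 starting at `q` in direction `d`:
the set `{q + t • d : t ∈ {0,1,2,3,4}}`. -/
def seg (q d : ℤ × ℤ) : Set (ℤ × ℤ) := {p | ∃ t : ℕ, t ≤ 4 ∧ p = q + (t : ℤ) • d}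

/-- The initial configuration of 36 crosses. -/
def S0 : Set (ℤ × ℤ) := {p |
  ((p.2 = 0 ∨ p.2 = 9) ∧ 3 ≤ p.1 ∧ p.1 ≤ 6) ∨
  ((p.1 = 0 ∨ p.1 = 9) ∧ 3 ≤ p.2 ∧ p.2 ≤ 6) ∨
  ((p.1 = 3 ∨ p.1 = 6) ∧ ((0 ≤ p.2 ∧ p.2 ≤ 3) ∨ (6 ≤ p.2 ∧ p.2 ≤ 9))) ∨
  ((p.2 = 3 ∨ p.2 = 6) ∧ ((0 ≤ p.1 ∧ p.1 ≤ 3) ∨ (6 ≤ p.1 ∧ p.1 ≤ 9)))}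

/-- A play of Morpion Solitaire 5D of length `N`: crosses `p i`, and lines
`seg (q i) (d i)` in directions `d i ∈ Dir`, subject to the rules of 5D.
(Index `i : Fin N` corresponds to move `i + 1`.) -/
structure Play (N : ℕ) where
  p : Fin N → ℤ × ℤ
  q : Fin N → ℤ × ℤ
  d : Fin N → ℤ × ℤ
  d_mem : ∀ i, d i ∈ Dir
  /-- rule (1): the new cross is placed on an empty point -/
  p_not_S0 : ∀ i, p i ∉ S0
  p_new : ∀ i j : Fin N, j < i → p j ≠ p i
  /-- rule (2): the new line passes through the new cross -/
  p_mem : ∀ i, p i ∈ seg (q i) (d i)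
  /-- rule (3): the new line passes only through existing crosses -/
  seg_sub : ∀ i, seg (q i) (d i) ⊆ S0 ∪ {x | ∃ j : Fin N, j ≤ i ∧ p j = x}
  /-- rule (4): two lines in the same direction are disjoint -/
  disj : ∀ i j : Fin N, j < i → d j = d i → seg (q i) (d i) ∩ seg (q j) (d j) = ∅

def segF (q d : ℤ × ℤ) : Finset (ℤ × ℤ) := (Finset.range 5).image fun t : ℕ => q + (t : ℤ) • d

lemma segF_coe (q d : ℤ × ℤ) : (segF q d : Set (ℤ × ℤ)) = seg q d := by
  ext p
  simp only [segF, Finset.coe_image, Finset.coe_range, Set.mem_image, Set.mem_Iio, seg,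
    Set.mem_setOf_eq]
  constructor
  · rintro ⟨t, ht, rfl⟩; exact ⟨t, by omega, rfl⟩
  · rintro ⟨t, ht, rfl⟩; exact ⟨t, by omega, rfl⟩

lemma segF_inj (q d : ℤ × ℤ) (hd : d ≠ 0) :
    Function.Injective fun t : ℕ => q + (t : ℤ) • d := by
  intro t t' h
  simp only [Prod.ext_iff, Prod.fst_add, Prod.snd_add, Prod.smul_fst, Prod.smul_snd,
    smul_eq_mul, add_right_inj] at h
  have hd' : d.1 ≠ 0 ∨ d.2 ≠ 0 := by
    by_contra hc; push_neg at hc; exact hd (Prod.ext hc.1 hc.2)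
  rcases hd' with h1 | h1
  · exact_mod_cast mul_right_cancel₀ h1 h.1
  · exact_mod_cast mul_right_cancel₀ h1 h.2

lemma segF_card (q d : ℤ × ℤ) (hd : d ≠ 0) : (segF q d).card = 5 := by
  rw [segF, Finset.card_image_of_injective _ (segF_inj q d hd), Finset.card_range]

lemma psi_pt (a b : ℤ) (q d : ℤ × ℤ) (t : ℕ) :
    a * (q + (t : ℤ) • d).1 + b * (q + (t : ℤ) • d).2
      = (a * q.1 + b * q.2) + t * (a * d.1 + b * d.2) := by
  simp only [Prod.fst_add, Prod.snd_add, Prod.smul_fst, Prod.smul_snd, smul_eq_mul]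
  ring

lemma filter_line_const (a b M : ℤ) (q d : ℤ × ℤ) (hψ : a * d.1 + b * d.2 = 0) (ρ : ℤ) :
    (segF q d).filter (fun p => (a * p.1 + b * p.2) % M = ρ)
      = if (a * q.1 + b * q.2) % M = ρ then segF q d else ∅ := by
  have hval : ∀ p ∈ segF q d, a * p.1 + b * p.2 = a * q.1 + b * q.2 := by
    intro p hp
    simp only [segF, Finset.mem_image, Finset.mem_range] at hp
    obtain ⟨t, ht, rfl⟩ := hp
    rw [psi_pt, hψ]; ring
  split_ifs with h
  · exact Finset.filter_true_of_mem fun p hp => by rw [hval p hp]; exact h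
  · exact Finset.filter_false_of_mem fun p hp => by rw [hval p hp]; exact h

lemma count_line (a b s : ℤ) (hs : s = 1 ∨ s = 2) (q d : ℤ × ℤ) (hd : d ≠ 0)
    (hψ : a * d.1 + b * d.2 = s) (ρ : ℤ) (h0 : 0 ≤ ρ) (h1 : ρ < 5 * s) :
    ((segF q d).filter fun p => (a * p.1 + b * p.2) % (5 * s) = ρ).card
      = if (a * q.1 + b * q.2) % s = ρ % s then 1 else 0 := by
  rw [segF, Finset.filter_image,
    Finset.card_image_of_injective _ (segF_inj q d hd)]
  have hcong : Finset.filter (fun t : ℕ => (a * (q + (t:ℤ) • d).1 + b * (q + (t:ℤ) • d).2) % (5*s) = ρ) (Finset.range 5)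
      = Finset.filter (fun t : ℕ => ((a * q.1 + b * q.2) + t * s) % (5*s) = ρ) (Finset.range 5) := by
    apply Finset.filter_congr
    intro t _
    rw [psi_pt, hψ]
  rw [hcong, Finset.card_filter]
  rcases hs with rfl | rfl <;>
    simp only [Finset.sum_range_succ, Finset.sum_range_zero] <;>
    push_cast <;>
    split_ifs <;> omega

lemma exists_r {n : ℕ} (hn : n % 5 = 1) (s : ℤ) (hs : s = 1 ∨ s = 2) (w : Fin n → ℤ) :
    ∃ r : ℤ, 0 ≤ r ∧ r < s ∧
      ((Finset.univ.filter fun i => w i % s = r).card) % 5 ≠ 0 := by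
  rcases hs with rfl | rfl
  · refine ⟨0, le_refl _, by norm_num, ?_⟩
    rw [Finset.filter_true_of_mem fun i _ => Int.emod_one _, Finset.card_univ, Fintype.card_fin]
    omega
  · by_contra h
    push_neg at h
    have h0 := h 0 le_rfl (by norm_num)
    have h1 := h 1 (by norm_num) (by norm_num)
    have hsum : (Finset.univ.filter fun i : Fin n => w i % 2 = 0).card
        + (Finset.univ.filter fun i : Fin n => w i % 2 = 1).card = n := by
      have e1 : (Finset.univ.filter fun i : Fin n => w i % 2 = 1)
          = (Finset.univ.filter fun i : Fin n => ¬ (w i % 2 = 0)) := by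
        apply Finset.filter_congr; intro i _; constructor <;> intro <;> omega
      rw [e1, Finset.card_filter_add_card_filter_not, Finset.card_univ, Fintype.card_fin]
    omega

lemma bnd (N c F G : ℕ) (h : N ≤ 5*c + F) (h' : 5*c ≤ N + G) :
    N % 5 ≤ F ∨ 5 - N % 5 ≤ G := by omega

lemma endgame (N m m' c0 c1 c2 c3 c4 F0 F1 F2 F3 F4 G0 G1 G2 G3 G4 : ℕ)
    (hN : N % 5 ≠ 0)
    (h0 : N ≤ 5*c0 + F0) (h0' : 5*c0 ≤ N + G0)
    (h1 : N ≤ 5*c1 + F1) (h1' : 5*c1 ≤ N + G1)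
    (h2 : N ≤ 5*c2 + F2) (h2' : 5*c2 ≤ N + G2)
    (h3 : N ≤ 5*c3 + F3) (h3' : 5*c3 ≤ N + G3)
    (h4 : N ≤ 5*c4 + F4) (h4' : 5*c4 ≤ N + G4)
    (hF : F0+F1+F2+F3+F4 ≤ m) (hG : G0+G1+G2+G3+G4 ≤ m') (hmm : m = m') : 4 ≤ m := by
  have b0 := bnd N c0 F0 G0 h0 h0'
  have b1 := bnd N c1 F1 G1 h1 h1'
  have b2 := bnd N c2 F2 G2 h2 h2'
  have b3 := bnd N c3 F3 G3 h3 h3'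
  have b4 := bnd N c4 F4 G4 h4 h4'
  have hb : 1 ≤ N % 5 ∧ N % 5 ≤ 4 := by omega
  rcases b0 with b0 | b0 <;> rcases b1 with b1 | b1 <;> rcases b2 with b2 | b2 <;>
    rcases b3 with b3 | b3 <;> rcases b4 with b4 | b4 <;> omega


/-- If `5k+1` pairwise disjoint lines of length `5` are drawn in each of two
distinct directions, then together they cover at least `(5k+1)·5 + 4`
lattice points. -/
theorem two_direction_cover (k : ℕ) (d₁ d₂ : ℤ × ℤ) (hd₁ : d₁ ∈ Dir)
    (hd₂ : d₂ ∈ Dir) (hne : d₁ ≠ d₂) (q₁ q₂ : Fin (5 * k + 1) → ℤ × ℤ)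
    (hdisj₁ : ∀ i j, i ≠ j → seg (q₁ i) d₁ ∩ seg (q₁ j) d₁ = ∅)
    (hdisj₂ : ∀ i j, i ≠ j → seg (q₂ i) d₂ ∩ seg (q₂ j) d₂ = ∅) :
    (5 * k + 1) * 5 + 4 ≤ ((⋃ i, seg (q₁ i) d₁) ∪ ⋃ i, seg (q₂ i) d₂).ncard := by
  classical
  simp only [Dir, Set.mem_insert_iff, Set.mem_singleton_iff] at hd₁ hd₂
  have hd₁0 : d₁ ≠ 0 := by rcases hd₁ with rfl | rfl | rfl | rfl <;> decide
  have hd₂0 : d₂ ≠ 0 := by rcases hd₂ with rfl | rfl | rfl | rfl <;> decide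
  obtain ⟨a, b, s, hs12, hL1, hL2⟩ :
      ∃ a b s : ℤ, (s = 1 ∨ s = 2) ∧ a * d₁.1 + b * d₁.2 = 0 ∧ a * d₂.1 + b * d₂.2 = s := by
    rcases hd₁ with rfl | rfl | rfl | rfl <;> rcases hd₂ with rfl | rfl | rfl | rfl <;>
      first
        | exact absurd rfl hne
        | exact ⟨0, 1, 1, Or.inl rfl, by decide, by decide⟩
        | exact ⟨0, -1, 1, Or.inl rfl, by decide, by decide⟩
        | exact ⟨1, 0, 1, Or.inl rfl, by decide, by decide⟩
        | exact ⟨1, -1, 1, Or.inl rfl, by decide, by decide⟩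
        | exact ⟨-1, 1, 1, Or.inl rfl, by decide, by decide⟩
        | exact ⟨1, -1, 2, Or.inr rfl, by decide, by decide⟩
        | exact ⟨1, 1, 1, Or.inl rfl, by decide, by decide⟩
        | exact ⟨1, 1, 2, Or.inr rfl, by decide, by decide⟩
  have hs0 : (0 : ℤ) < s := by rcases hs12 with rfl | rfl <;> norm_num
  set A := Finset.univ.biUnion (fun i : Fin (5 * k + 1) => segF (q₁ i) d₁) with hA
  set B := Finset.univ.biUnion (fun i : Fin (5 * k + 1) => segF (q₂ i) d₂) with hB
  -- rewrite the goal in terms of Finset cards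
  have hcoeA : (⋃ i, seg (q₁ i) d₁) = (A : Set (ℤ × ℤ)) := by
    rw [hA, Finset.coe_biUnion]
    simp [segF_coe]
  have hcoeB : (⋃ i, seg (q₂ i) d₂) = (B : Set (ℤ × ℤ)) := by
    rw [hB, Finset.coe_biUnion]
    simp [segF_coe]
  rw [hcoeA, hcoeB, ← Finset.coe_union, Set.ncard_coe_finset]
  -- disjointness
  have hdF₁ : ∀ i ∈ (Finset.univ : Finset (Fin (5*k+1))), ∀ j ∈ (Finset.univ : Finset (Fin (5*k+1))),
      i ≠ j → Disjoint (segF (q₁ i) d₁) (segF (q₁ j) d₁) := by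
    intro i _ j _ hij
    rw [← Finset.disjoint_coe, segF_coe, segF_coe, Set.disjoint_iff_inter_eq_empty]
    exact hdisj₁ i j hij
  have hdF₂ : ∀ i ∈ (Finset.univ : Finset (Fin (5*k+1))), ∀ j ∈ (Finset.univ : Finset (Fin (5*k+1))),
      i ≠ j → Disjoint (segF (q₂ i) d₂) (segF (q₂ j) d₂) := by
    intro i _ j _ hij
    rw [← Finset.disjoint_coe, segF_coe, segF_coe, Set.disjoint_iff_inter_eq_empty]
    exact hdisj₂ i j hij
  have cardA : A.card = (5 * k + 1) * 5 := by
    rw [hA, Finset.card_biUnion hdF₁]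
    rw [Finset.sum_congr rfl fun i _ => segF_card (q₁ i) d₁ hd₁0]
    simp [Finset.card_univ, mul_comm]
  have cardB : B.card = (5 * k + 1) * 5 := by
    rw [hB, Finset.card_biUnion hdF₂]
    rw [Finset.sum_congr rfl fun i _ => segF_card (q₂ i) d₂ hd₂0]
    simp [Finset.card_univ, mul_comm]
  -- per-residue counts
  have cardBρ : ∀ ρ : ℤ, 0 ≤ ρ → ρ < 5 * s →
      (B.filter fun p => (a * p.1 + b * p.2) % (5 * s) = ρ).card
        = (Finset.univ.filter fun i : Fin (5*k+1) =>
            (a * (q₂ i).1 + b * (q₂ i).2) % s = ρ % s).card := by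
    intro ρ h0 h1
    rw [hB, Finset.filter_biUnion,
      Finset.card_biUnion (fun i hi j hj hij =>
        Finset.disjoint_filter_filter (hdF₂ i hi j hj hij)),
      Finset.card_filter]
    exact Finset.sum_congr rfl fun i _ => count_line a b s hs12 (q₂ i) d₂ hd₂0 hL2 ρ h0 h1
  have cardAρ : ∀ ρ : ℤ,
      (A.filter fun p => (a * p.1 + b * p.2) % (5 * s) = ρ).card
        = 5 * (Finset.univ.filter fun i : Fin (5*k+1) =>
            (a * (q₁ i).1 + b * (q₁ i).2) % (5 * s) = ρ).card := by
    intro ρ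
    rw [hA, Finset.filter_biUnion,
      Finset.card_biUnion (fun i hi j hj hij =>
        Finset.disjoint_filter_filter (hdF₁ i hi j hj hij)),
      Finset.card_filter, Finset.mul_sum]
    refine Finset.sum_congr rfl fun i _ => ?_
    rw [filter_line_const a b (5 * s) (q₁ i) d₁ hL1 ρ]
    split_ifs <;> simp [segF_card _ _ hd₁0]
  -- fiberwise decomposition of the difference sets
  have fib : ∀ X : Finset (ℤ × ℤ), X.card = ∑ ρ ∈ Finset.Ico (0 : ℤ) (5 * s),
      (X.filter fun p => (a * p.1 + b * p.2) % (5 * s) = ρ).card := by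
    intro X
    apply Finset.card_eq_sum_card_fiberwise
    intro p _
    rw [Finset.mem_coe, Finset.mem_Ico]
    exact ⟨Int.emod_nonneg _ (by omega), Int.emod_lt_of_pos _ (by omega)⟩
  -- choose the interesting residue class
  obtain ⟨r, hr0, hrs, hN⟩ := exists_r (n := 5*k+1) (by omega) s hs12
      (fun i => a * (q₂ i).1 + b * (q₂ i).2)
  try simp only [] at hN
  -- the five residues mod 5s in the class of r
  have hmod : ∀ c : ℤ, (r + c * s) % s = r := fun c => by
    rw [Int.add_mul_emod_self_right, Int.emod_eq_of_lt hr0 hrs]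
  -- key inequalities per residue
  have key : ∀ ρ : ℤ, 0 ≤ ρ → ρ < 5 * s → ρ % s = r →
      ((Finset.univ.filter fun i : Fin (5*k+1) =>
          (a * (q₂ i).1 + b * (q₂ i).2) % s = r).card
        ≤ 5 * (Finset.univ.filter fun i : Fin (5*k+1) =>
            (a * (q₁ i).1 + b * (q₁ i).2) % (5 * s) = ρ).card
          + ((B \ A).filter fun p => (a * p.1 + b * p.2) % (5 * s) = ρ).card) ∧
      (5 * (Finset.univ.filter fun i : Fin (5*k+1) =>
            (a * (q₁ i).1 + b * (q₁ i).2) % (5 * s) = ρ).card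
        ≤ (Finset.univ.filter fun i : Fin (5*k+1) =>
            (a * (q₂ i).1 + b * (q₂ i).2) % s = r).card
          + ((A \ B).filter fun p => (a * p.1 + b * p.2) % (5 * s) = ρ).card) := by
    intro ρ h0 h1 hρr
    constructor
    · have hsub : B.filter (fun p => (a * p.1 + b * p.2) % (5 * s) = ρ)
          ⊆ (A.filter fun p => (a * p.1 + b * p.2) % (5 * s) = ρ)
            ∪ ((B \ A).filter fun p => (a * p.1 + b * p.2) % (5 * s) = ρ) := by
        intro p hp
        simp only [Finset.mem_filter, Finset.mem_union, Finset.mem_sdiff] at *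
        by_cases hpA : p ∈ A
        · exact Or.inl ⟨hpA, hp.2⟩
        · exact Or.inr ⟨⟨hp.1, hpA⟩, hp.2⟩
      have h2 := (Finset.card_le_card hsub).trans (Finset.card_union_le _ _)
      rw [cardBρ ρ h0 h1, cardAρ ρ, hρr] at h2
      exact h2
    · have hsub : A.filter (fun p => (a * p.1 + b * p.2) % (5 * s) = ρ)
          ⊆ (B.filter fun p => (a * p.1 + b * p.2) % (5 * s) = ρ)
            ∪ ((A \ B).filter fun p => (a * p.1 + b * p.2) % (5 * s) = ρ) := by
        intro p hp
        simp only [Finset.mem_filter, Finset.mem_union, Finset.mem_sdiff] at *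
        by_cases hpB : p ∈ B
        · exact Or.inl ⟨hpB, hp.2⟩
        · exact Or.inr ⟨⟨hp.1, hpB⟩, hp.2⟩
      have h2 := (Finset.card_le_card hsub).trans (Finset.card_union_le _ _)
      rw [cardBρ ρ h0 h1, cardAρ ρ, hρr] at h2
      exact h2
  have k0 := key (r + 0 * s) (by omega) (by omega) (hmod 0)
  have k1 := key (r + 1 * s) (by omega) (by omega) (hmod 1)
  have k2 := key (r + 2 * s) (by omega) (by omega) (hmod 2)
  have k3 := key (r + 3 * s) (by omega) (by omega) (hmod 3)
  have k4 := key (r + 4 * s) (by omega) (by omega) (hmod 4)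
  -- sum bounds
  have hSins : ({r + 0*s, r + 1*s, r + 2*s, r + 3*s, r + 4*s} : Finset ℤ)
      = insert (r+0*s) (insert (r+1*s) (insert (r+2*s) (insert (r+3*s) {r+4*s}))) := rfl
  have hsub5 : ({r + 0*s, r + 1*s, r + 2*s, r + 3*s, r + 4*s} : Finset ℤ)
      ⊆ Finset.Ico (0 : ℤ) (5 * s) := by
    intro ρ hρ
    simp only [Finset.mem_insert, Finset.mem_singleton] at hρ
    rw [Finset.mem_Ico]
    rcases hρ with rfl | rfl | rfl | rfl | rfl <;> omega
  have sumbound : ∀ X : Finset (ℤ × ℤ),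
      ((X.filter fun p => (a * p.1 + b * p.2) % (5 * s) = r + 0*s).card
      + (X.filter fun p => (a * p.1 + b * p.2) % (5 * s) = r + 1*s).card
      + (X.filter fun p => (a * p.1 + b * p.2) % (5 * s) = r + 2*s).card
      + (X.filter fun p => (a * p.1 + b * p.2) % (5 * s) = r + 3*s).card
      + (X.filter fun p => (a * p.1 + b * p.2) % (5 * s) = r + 4*s).card) ≤ X.card := by
    intro X
    rw [fib X]
    have hexp : ∑ ρ ∈ ({r + 0*s, r + 1*s, r + 2*s, r + 3*s, r + 4*s} : Finset ℤ),
        (X.filter fun p => (a * p.1 + b * p.2) % (5 * s) = ρ).card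
        = ((X.filter fun p => (a * p.1 + b * p.2) % (5 * s) = r + 0*s).card
        + (X.filter fun p => (a * p.1 + b * p.2) % (5 * s) = r + 1*s).card
        + (X.filter fun p => (a * p.1 + b * p.2) % (5 * s) = r + 2*s).card
        + (X.filter fun p => (a * p.1 + b * p.2) % (5 * s) = r + 3*s).card
        + (X.filter fun p => (a * p.1 + b * p.2) % (5 * s) = r + 4*s).card) := by
      rw [hSins, Finset.sum_insert (by simp; omega), Finset.sum_insert (by simp; omega),
        Finset.sum_insert (by simp; omega), Finset.sum_insert (by simp; omega),
        Finset.sum_singleton]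
      ring
    rw [← hexp]
    exact Finset.sum_le_sum_of_subset hsub5
  have sF := sumbound (B \ A)
  have sG := sumbound (A \ B)
  -- cardinal identities
  have hu1 : (B \ A).card + A.card = (B ∪ A).card := Finset.card_sdiff_add_card B A
  have hu2 : (A \ B).card + B.card = (A ∪ B).card := Finset.card_sdiff_add_card A B
  rw [Finset.union_comm] at hu1
  have hm : (B \ A).card = (A \ B).card := by omega
  have h4 := endgame _ _ _ _ _ _ _ _ _ _ _ _ _ _ _ _ _ _ hN
    k0.1 k0.2 k1.1 k1.2 k2.1 k2.2 k3.1 k3.2 k4.1 k4.2 sF sG hm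
  omega
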